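/- Suppose that for every n ≥ 1 and every multiplicative submonoid M of F_2^n containing 0 and 1, there exists an involution T : M → M such that the ideal generated by {x·T(x) : x ∈ M} is proper. Then the intersection-closed sets conjecture holds: for every finite intersection-closed family S of subsets of a finite set X with ∅, X ∈ S and |S| > 1, there is a point p ∈ X lying in at most half of the sets in S. -/

import Mathlib

lemma zmod2_ne_zero {a : ZMod 2} (h : a ≠ 0) : a = 1 := by
  revert h; revert a; decide

/-- A proper ideal of `𝔽₂ⁿ` generated by a set of vectors misses some coordinate. -/
lemma proper_span_coord {n : ℕ} (G : Set (Fin n → ZMod 2))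
    (h : Ideal.span G ≠ ⊤) : ∃ i : Fin n, ∀ y ∈ G, y i = 0 := by
  by_contra hc
  push_neg at hc
  apply h
  rw [Ideal.eq_top_iff_one]
  have h1 : (1 : Fin n → ZMod 2) = ∑ i : Fin n, Pi.single i 1 := by
    funext j
    rw [Finset.sum_apply]
    simp [Pi.single_apply]
  rw [h1]
  apply Ideal.sum_mem
  intro i _
  obtain ⟨y, hyG, hyi⟩ := hc i
  have hy1 : y i = 1 := zmod2_ne_zero hyi
  have heq : (Pi.single i 1 : Fin n → ZMod 2) = y * Pi.single i 1 := by
    funext j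
    by_cases hj : j = i
    · subst hj; simp [Pi.single_apply, hy1]
    · simp [Pi.single_apply, hj]
  rw [heq]
  exact Ideal.mul_mem_right _ _ (Ideal.subset_span hyG)

/-- If for every `n ≥ 1` every multiplicative submonoid of `𝔽₂ⁿ` containing `0` and `1`
admits a pseudocomplement (an involution `T` whose quadratic ideal is proper), then the
intersection-closed sets conjecture holds. -/
theorem stmt5
    (H : ∀ n : ℕ, 1 ≤ n → ∀ M : Submonoid (Fin n → ZMod 2), (0 : Fin n → ZMod 2) ∈ M →
      ∃ T : (Fin n → ZMod 2) → (Fin n → ZMod 2),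
        (∀ x ∈ M, T x ∈ M) ∧ (∀ x ∈ M, T (T x) = x) ∧
        Ideal.span {y : Fin n → ZMod 2 | ∃ x ∈ M, y = x * T x} ≠ ⊤) :
    ∀ (X : Type) [Fintype X] [DecidableEq X] (S : Finset (Finset X)),
      (∀ A ∈ S, ∀ B ∈ S, A ∩ B ∈ S) → ∅ ∈ S → Finset.univ ∈ S → 1 < S.card →
      ∃ p : X, 2 * (S.filter (fun A => p ∈ A)).card ≤ S.card := by
  intro X _ _ S hinter hempty huniv hcard
  classical
  -- X is nonempty
  have hX : Nonempty X := by
    by_contra hne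
    have hsub : ∀ A : Finset X, A = ∅ := by
      intro A
      ext x
      exact absurd ⟨x⟩ hne
    have : S ⊆ {∅} := by
      intro A hA
      simp [hsub A]
    have := Finset.card_le_card this
    simp at this
    omega
  set n := Fintype.card X with hn
  have hn1 : 1 ≤ n := Fintype.card_pos
  let e : Fin n ≃ X := (Fintype.equivFin X).symm
  -- indicator function
  let φ : Finset X → (Fin n → ZMod 2) := fun A i => if e i ∈ A then 1 else 0
  have φinj : Function.Injective φ := by
    intro A B hAB
    ext x
    have := congrFun hAB (e.symm x)
    simp only [φ, Equiv.apply_symm_apply] at this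
    by_cases hA : x ∈ A <;> by_cases hB : x ∈ B <;> simp_all
  have φmul : ∀ A B, φ A * φ B = φ (A ∩ B) := by
    intro A B
    funext i
    simp only [φ, Pi.mul_apply, Finset.mem_inter]
    by_cases hA : e i ∈ A <;> by_cases hB : e i ∈ B <;> simp [hA, hB]
  have φone : φ Finset.univ = 1 := by
    funext i; simp [φ]
  have φzero : φ ∅ = 0 := by
    funext i; simp [φ]
  let M : Submonoid (Fin n → ZMod 2) :=
    { carrier := {x | ∃ A ∈ S, x = φ A}
      one_mem' := ⟨Finset.univ, huniv, φone.symm⟩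
      mul_mem' := by
        rintro x y ⟨A, hA, rfl⟩ ⟨B, hB, rfl⟩
        exact ⟨A ∩ B, hinter A hA B hB, (φmul A B)⟩ }
  have h0M : (0 : Fin n → ZMod 2) ∈ M := ⟨∅, hempty, φzero.symm⟩
  obtain ⟨T, hTM, hTT, hTprop⟩ := H n hn1 M h0M
  obtain ⟨i, hi⟩ := proper_span_coord _ hTprop
  refine ⟨e i, ?_⟩
  -- the pairing map on sets
  have key : (S.filter (fun A => e i ∈ A)).card ≤ (S.filter (fun A => e i ∉ A)).card := by
    -- map A to the set B with φ B = T (φ A)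
    have hmap : ∀ A ∈ S.filter (fun A => e i ∈ A),
        ∃ B ∈ S.filter (fun A => e i ∉ A), φ B = T (φ A) := by
      intro A hA
      rw [Finset.mem_filter] at hA
      obtain ⟨hAS, hAi⟩ := hA
      obtain ⟨B, hBS, hB⟩ := hTM (φ A) ⟨A, hAS, rfl⟩
      refine ⟨B, ?_, hB.symm⟩
      rw [Finset.mem_filter]
      refine ⟨hBS, ?_⟩
      have hgen : (φ A * T (φ A)) i = 0 :=
        hi _ ⟨φ A, ⟨A, hAS, rfl⟩, rfl⟩
      have hφA : φ A i = 1 := by simp [φ, hAi]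
      rw [Pi.mul_apply, hφA, one_mul, hB] at hgen
      intro hBi
      simp [φ, hBi] at hgen
    choose f hf hfeq using hmap
    apply Finset.card_le_card_of_injOn (fun A => if h : A ∈ S.filter (fun A => e i ∈ A) then f A h else ∅)
    · intro A hA
      simp only [Finset.mem_coe] at hA ⊢
      simp only [hA, dif_pos]
      exact hf A hA
    · intro A hA A' hA' heq
      simp only [Finset.mem_coe] at hA hA'
      simp only [hA, hA', dif_pos] at heq
      have h1 : T (φ A) = T (φ A') := by
        rw [← hfeq A hA, ← hfeq A' hA', heq]
      have hAS : A ∈ S := (Finset.mem_filter.mp hA).1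
      have hAS' : A' ∈ S := (Finset.mem_filter.mp hA').1
      have := congrArg T h1
      rw [hTT _ ⟨A, hAS, rfl⟩, hTT _ ⟨A', hAS', rfl⟩] at this
      exact φinj this
  have hsplit := Finset.card_filter_add_card_filter_not
    (s := S) (p := fun A => e i ∈ A)
  omega
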